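/- Let F = F_{0,−1}. Then (1, 0) is a fixed point of F, F^4(x, y) ∈ Q₁ for every (x, y) ∈ ℝ², and F^6(x, y) = (1, 0) for every (x, y) ∈ ℝ². -/
import Mathlib


/-- The piecewise linear map `F_{a,b}(x,y) = (|x| - y + a, x - |y| + b)`. -/
noncomputable def F (a b : ℝ) : ℝ × ℝ → ℝ × ℝ :=
  fun p => (|p.1| - p.2 + a, p.1 - |p.2| + b)

/-- The closed first quadrant. -/
def Q1 : Set (ℝ × ℝ) := {p | 0 ≤ p.1 ∧ 0 ≤ p.2}

lemma myabs (a : ℝ) : |a| = if 0 ≤ a then a else -a := by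
  split_ifs with h
  · exact abs_of_nonneg h
  · exact abs_of_neg (lt_of_not_ge h)

set_option maxHeartbeats 2000000 in
lemma step4 (p : ℝ × ℝ) : 0 ≤ ((F 0 (-1))^[4] p).1 ∧ 0 ≤ ((F 0 (-1))^[4] p).2 ∧
    1 ≤ ((F 0 (-1))^[4] p).1 - ((F 0 (-1))^[4] p).2 := by
  obtain ⟨x, y⟩ := p
  simp only [F, Function.iterate_succ, Function.iterate_zero, Function.comp_apply, id_eq,
    myabs]
  split_ifs <;> refine ⟨by linarith, by linarith, by linarith⟩

/-- For `F = F_{0,-1}`: `(1,0)` is a fixed point, `F^[4]` maps the plane into `Q₁`,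
and `F^[6] x = (1,0)` for every `x`. -/
theorem case_a_zero_b_neg_one :
    F 0 (-1) (1, 0) = (1, 0) ∧
    (∀ x : ℝ × ℝ, (F 0 (-1))^[4] x ∈ Q1) ∧
    (∀ x : ℝ × ℝ, (F 0 (-1))^[6] x = (1, 0)) := by
  refine ⟨by norm_num [F], fun x => ⟨(step4 x).1, (step4 x).2.1⟩, fun x => ?_⟩
  obtain ⟨h1, h2, h3⟩ := step4 x
  have h6 : (F 0 (-1))^[6] x = (F 0 (-1))^[2] ((F 0 (-1))^[4] x) := by
    rw [← Function.iterate_add_apply]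
  rw [h6]
  set q := (F 0 (-1))^[4] x with hq
  have e1 : F 0 (-1) q = (q.1 - q.2, q.1 - q.2 - 1) := by
    simp only [F, abs_of_nonneg h1, abs_of_nonneg h2]
    ring_nf
  have e2 : F 0 (-1) (q.1 - q.2, q.1 - q.2 - 1) = (1, 0) := by
    have hu : (1:ℝ) ≤ q.1 - q.2 := h3
    simp only [F, abs_of_nonneg (by linarith : (0:ℝ) ≤ q.1 - q.2),
      abs_of_nonneg (by linarith : (0:ℝ) ≤ q.1 - q.2 - 1)]
    norm_num
  simp only [Function.iterate_succ, Function.iterate_zero, Function.comp_apply, id_eq]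
  rw [e1, e2]
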